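/- arXiv:2002.08905 — 4 statements merged into one kernel-verified Lean document; each statement's English description precedes it below -/
import Mathlib

section
/- Let (C₁, ε₁) and (C₂, ε₂) be counital objects in 𝒜. The following are equivalent: (1) C₁ ≤_L C₂; (2) C₁ ≤_R C₂; (3) there exists a morphism ν : C₁ → C₂ with ε₂ ∘ ν = ε₁. -/
open CategoryTheory Category Limits MonoidalCategory ZeroObject

noncomputable section

variable {𝒜 : Type*} [Category 𝒜] [MonoidalCategory 𝒜] [Preadditive 𝒜] [MonoidalPreadditive 𝒜]

/-- `(C, ε)` is a counital object: both `ε ⋆ id_C` and `id_C ⋆ ε` admit right inverses. -/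
def IsCounital (C : 𝒜) (ε : C ⟶ 𝟙_ 𝒜) : Prop :=
  (∃ ΔL : C ⟶ C ⊗ C, ΔL ≫ (ε ▷ C) ≫ (λ_ C).hom = 𝟙 C) ∧
  (∃ ΔR : C ⟶ C ⊗ C, ΔR ≫ (C ◁ ε) ≫ (ρ_ C).hom = 𝟙 C)

/-- `X` is a retract of `Y`. -/
def IsRetractOf (X Y : 𝒜) : Prop :=
  ∃ (σ : X ⟶ Y) (π : Y ⟶ X), σ ≫ π = 𝟙 X

/-- The left cell (pre)order: `X ≤_L Y` iff `X` is a retract of `Z ⋆ Y` for some `Z`. -/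
def leqL (X Y : 𝒜) : Prop := ∃ Z : 𝒜, IsRetractOf X (Z ⊗ Y)

/-- The right cell (pre)order: `X ≤_R Y` iff `X` is a retract of `Y ⋆ Z` for some `Z`. -/
def leqR (X Y : 𝒜) : Prop := ∃ Z : 𝒜, IsRetractOf X (Y ⊗ Z)

/-- `X` is right `C`-projective. -/
def RightCProjective (C : 𝒜) (ε : C ⟶ 𝟙_ 𝒜) (X : 𝒜) : Prop :=
  ∃ a : X ⟶ X ⊗ C, a ≫ (X ◁ ε) ≫ (ρ_ X).hom = 𝟙 X

/-- `X` is left `C`-projective. -/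
def LeftCProjective (C : 𝒜) (ε : C ⟶ 𝟙_ 𝒜) (X : 𝒜) : Prop :=
  ∃ a : X ⟶ C ⊗ X, a ≫ (ε ▷ X) ≫ (λ_ X).hom = 𝟙 X

end
section Aux
variable {𝒜 : Type*} [Category 𝒜] [MonoidalCategory 𝒜]

private lemma counit_L_fac (C₁ C₂ Z : 𝒜) (ε₁ : C₁ ⟶ 𝟙_ 𝒜) (ε₂ : C₂ ⟶ 𝟙_ 𝒜)
    (σ : C₁ ⟶ Z ⊗ C₂) (π : Z ⊗ C₂ ⟶ C₁) (hσπ : σ ≫ π = 𝟙 C₁)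
    (Δ : C₂ ⟶ C₂ ⊗ C₂) (hΔ : Δ ≫ (C₂ ◁ ε₂) ≫ (ρ_ C₂).hom = 𝟙 C₂) :
    ∃ ν : C₁ ⟶ C₂, ν ≫ ε₂ = ε₁ := by
  refine ⟨σ ≫ (Z ◁ Δ) ≫ (α_ Z C₂ C₂).inv ≫ ((π ≫ ε₁) ▷ C₂) ≫ (λ_ C₂).hom, ?_⟩
  have hΔ' : Δ ≫ (C₂ ◁ ε₂) = (ρ_ C₂).inv := by
    rw [← cancel_mono (ρ_ C₂).hom, assoc, hΔ]; simp
  have key : (Z ◁ (ρ_ C₂).inv) ≫ (α_ Z C₂ (𝟙_ 𝒜)).inv = (ρ_ (Z ⊗ C₂)).inv := by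
    simp [rightUnitor_tensor_hom]
  simp only [assoc]
  rw [← leftUnitor_naturality, ← whisker_exchange_assoc,
    ← associator_inv_naturality_right_assoc, ← MonoidalCategory.whiskerLeft_comp_assoc, hΔ',
    reassoc_of% key, ← rightUnitor_inv_naturality_assoc]
  simp [unitors_equal, reassoc_of% hσπ]

private lemma counit_R_fac (C₁ C₂ Z : 𝒜) (ε₁ : C₁ ⟶ 𝟙_ 𝒜) (ε₂ : C₂ ⟶ 𝟙_ 𝒜)
    (σ : C₁ ⟶ C₂ ⊗ Z) (π : C₂ ⊗ Z ⟶ C₁) (hσπ : σ ≫ π = 𝟙 C₁)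
    (Δ : C₂ ⟶ C₂ ⊗ C₂) (hΔ : Δ ≫ (ε₂ ▷ C₂) ≫ (λ_ C₂).hom = 𝟙 C₂) :
    ∃ ν : C₁ ⟶ C₂, ν ≫ ε₂ = ε₁ := by
  refine ⟨σ ≫ (Δ ▷ Z) ≫ (α_ C₂ C₂ Z).hom ≫ (C₂ ◁ (π ≫ ε₁)) ≫ (ρ_ C₂).hom, ?_⟩
  have hΔ' : Δ ≫ (ε₂ ▷ C₂) = (λ_ C₂).inv := by
    rw [← cancel_mono (λ_ C₂).hom, assoc, hΔ]; simp
  have key : ((λ_ C₂).inv ▷ Z) ≫ (α_ (𝟙_ 𝒜) C₂ Z).hom = (λ_ (C₂ ⊗ Z)).inv := by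
    simp [leftUnitor_tensor_hom]
  simp only [assoc]
  rw [← rightUnitor_naturality, whisker_exchange_assoc,
    ← associator_naturality_left_assoc, ← comp_whiskerRight_assoc, hΔ',
    reassoc_of% key, ← leftUnitor_inv_naturality_assoc]
  simp [unitors_inv_equal, reassoc_of% hσπ]

private lemma counit_fac_L (C₁ C₂ : 𝒜) (ε₁ : C₁ ⟶ 𝟙_ 𝒜) (ε₂ : C₂ ⟶ 𝟙_ 𝒜)
    (ν : C₁ ⟶ C₂) (hν : ν ≫ ε₂ = ε₁)
    (Δ : C₁ ⟶ C₁ ⊗ C₁) (hΔ : Δ ≫ (C₁ ◁ ε₁) ≫ (ρ_ C₁).hom = 𝟙 C₁) :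
    leqL C₁ C₂ := by
  refine ⟨C₁, Δ ≫ (C₁ ◁ ν), (C₁ ◁ ε₂) ≫ (ρ_ C₁).hom, ?_⟩
  rw [assoc, ← MonoidalCategory.whiskerLeft_comp_assoc, hν, ← assoc]
  simpa using hΔ

private lemma counit_fac_R (C₁ C₂ : 𝒜) (ε₁ : C₁ ⟶ 𝟙_ 𝒜) (ε₂ : C₂ ⟶ 𝟙_ 𝒜)
    (ν : C₁ ⟶ C₂) (hν : ν ≫ ε₂ = ε₁)
    (Δ : C₁ ⟶ C₁ ⊗ C₁) (hΔ : Δ ≫ (ε₁ ▷ C₁) ≫ (λ_ C₁).hom = 𝟙 C₁) :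
    leqR C₁ C₂ := by
  refine ⟨C₁, Δ ≫ (ν ▷ C₁), (ε₂ ▷ C₁) ≫ (λ_ C₁).hom, ?_⟩
  rw [assoc, ← comp_whiskerRight_assoc, hν, ← assoc]
  simpa using hΔ

end Aux

/-- Lemma 2.6 (`lemma:counitorder`): for counital objects `(C₁, ε₁)` and `(C₂, ε₂)`,
the conditions `C₁ ≤_L C₂`, `C₁ ≤_R C₂`, and "`ε₁` factors through `ε₂`" are equivalent. -/

theorem stmt_1 {𝒜 : Type*} [Category 𝒜] [MonoidalCategory 𝒜] [Preadditive 𝒜]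
    [MonoidalPreadditive 𝒜] (C₁ C₂ : 𝒜) (ε₁ : C₁ ⟶ 𝟙_ 𝒜) (ε₂ : C₂ ⟶ 𝟙_ 𝒜)
    (h₁ : IsCounital C₁ ε₁) (h₂ : IsCounital C₂ ε₂) :
    (leqL C₁ C₂ ↔ leqR C₁ C₂) ∧
    (leqL C₁ C₂ ↔ ∃ ν : C₁ ⟶ C₂, ν ≫ ε₂ = ε₁) := by
  obtain ⟨ΔL₁, hΔL₁⟩ := h₁.1
  obtain ⟨ΔR₁, hΔR₁⟩ := h₁.2
  obtain ⟨ΔL₂, hΔL₂⟩ := h₂.1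
  obtain ⟨ΔR₂, hΔR₂⟩ := h₂.2
  have hLf : leqL C₁ C₂ → ∃ ν : C₁ ⟶ C₂, ν ≫ ε₂ = ε₁ := by
    rintro ⟨Z, σ, π, hσπ⟩
    exact counit_L_fac C₁ C₂ Z ε₁ ε₂ σ π hσπ ΔR₂ hΔR₂
  have hRf : leqR C₁ C₂ → ∃ ν : C₁ ⟶ C₂, ν ≫ ε₂ = ε₁ := by
    rintro ⟨Z, σ, π, hσπ⟩
    exact counit_R_fac C₁ C₂ Z ε₁ ε₂ σ π hσπ ΔL₂ hΔL₂
  have hfL : (∃ ν : C₁ ⟶ C₂, ν ≫ ε₂ = ε₁) → leqL C₁ C₂ := by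
    rintro ⟨ν, hν⟩
    exact counit_fac_L C₁ C₂ ε₁ ε₂ ν hν ΔR₁ hΔR₁
  have hfR : (∃ ν : C₁ ⟶ C₂, ν ≫ ε₂ = ε₁) → leqR C₁ C₂ := by
    rintro ⟨ν, hν⟩
    exact counit_fac_R C₁ C₂ ε₁ ε₂ ν hν ΔL₁ hΔL₁
  exact ⟨⟨fun h => hfR (hLf h), fun h => hfL (hRf h)⟩, ⟨hLf, hfL⟩⟩
end

section
/- For all n ≥ 2 and all l with 2 ≤ l ≤ n, the composite (id_{l−1} ⋆ ε ⋆ id_{n−l}) ∘ e_n : C^{⋆n} → C^{⋆(n−1)} is zero. -/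
open CategoryTheory Category Limits MonoidalCategory ZeroObject

noncomputable section

variable {𝒜 : Type*} [Category 𝒜] [MonoidalCategory 𝒜] [Preadditive 𝒜] [MonoidalPreadditive 𝒜]

/-- `Cpow C n` is the `n`-fold tensor power `C^{⋆n}`, with `C^{⋆0} = 𝟙` and `C^{⋆1} = C`. -/
def Cpow (C : 𝒜) : ℕ → 𝒜
  | 0 => 𝟙_ 𝒜
  | 1 => C
  | (n+2) => C ⊗ Cpow C (n+1)

/-- `epsAt C ε n i : C^{⋆(n+1)} ⟶ C^{⋆n}` is `id^{⋆i} ⋆ ε ⋆ id^{⋆(n-i)}`,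
applying `ε` to the (0-based) `i`-th tensor factor (and `0` if `i > n`). -/
def epsAt (C : 𝒜) (ε : C ⟶ 𝟙_ 𝒜) : (n i : ℕ) → (Cpow C (n+1) ⟶ Cpow C n)
  | 0, 0 => ε
  | 0, (_+1) => 0
  | (n+1), 0 => (ε ▷ Cpow C (n+1)) ≫ (λ_ (Cpow C (n+1))).hom
  | 1, 1 => (C ◁ ε) ≫ (ρ_ C).hom
  | 1, (_+2) => 0
  | (n+2), (i+1) => C ◁ epsAt C ε (n+1) i

/-- `epsAtPos C ε n l : C^{⋆n} ⟶ C^{⋆(n-1)}` is `id^{⋆(l-1)} ⋆ ε ⋆ id^{⋆(n-l)}`,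
applying `ε` to the (1-based) `l`-th tensor factor. -/
def epsAtPos (C : 𝒜) (ε : C ⟶ 𝟙_ 𝒜) : (n l : ℕ) → (Cpow C n ⟶ Cpow C (n-1))
  | 0, _ => 0
  | (m+1), l => epsAt C ε m (l-1)

/-- `Dfront C Δ n : C^{⋆(n+1)} ⟶ C^{⋆(n+2)}` is `Δ ⋆ id^{⋆n}`,
applying `Δ` to the front tensor factor. -/
def Dfront (C : 𝒜) (Δ : C ⟶ C ⊗ C) : (n : ℕ) → (Cpow C (n+1) ⟶ Cpow C (n+2))
  | 0 => Δ
  | (n+1) => (Δ ▷ Cpow C (n+1)) ≫ (α_ C C (Cpow C (n+1))).hom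

/-- The endomorphisms `e_n ∈ End(C^{⋆n})` of Definition 4.1: `e_0 = e_1 = id`,
`e_2 = id_2 − Δ ∘ (id_1 ⋆ ε)`, and
`e_n = (e_2 ⋆ id_{n-2}) ∘ (id_1 ⋆ e_2 ⋆ id_{n-3}) ∘ ⋯ ∘ (id_{n-2} ⋆ e_2)`,
expressed via the equivalent recursion `e_{n+2} = (e_2 ⋆ id_n) ∘ (id_1 ⋆ e_{n+1})`. -/
def eIdem (C : 𝒜) (ε : C ⟶ 𝟙_ 𝒜) (Δ : C ⟶ C ⊗ C) : (n : ℕ) → (Cpow C n ⟶ Cpow C n)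
  | 0 => 𝟙 _
  | 1 => 𝟙 _
  | (n+2) => (C ◁ eIdem C ε Δ (n+1)) ≫
      (𝟙 (Cpow C (n+2)) - (epsAt C ε (n+1) 1 ≫ Dfront C Δ n))

end

section Aux

set_option linter.unusedSectionVars false

variable {𝒜 : Type*} [Category 𝒜] [MonoidalCategory 𝒜] [Preadditive 𝒜]
    [MonoidalPreadditive 𝒜] (C : 𝒜) (ε : C ⟶ 𝟙_ 𝒜) (Δ : C ⟶ C ⊗ C)

lemma epsAt_e00 : epsAt C ε 0 0 = ε := rfl
lemma epsAt_e0s (i : ℕ) : epsAt C ε 0 (i+1) = 0 := rfl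
lemma epsAt_es0 (n : ℕ) :
    epsAt C ε (n+1) 0 = (ε ▷ Cpow C (n+1)) ≫ (λ_ (Cpow C (n+1))).hom := rfl
lemma epsAt_e11 : epsAt C ε 1 1 = (C ◁ ε) ≫ (ρ_ C).hom := rfl
lemma epsAt_e1ss (i : ℕ) : epsAt C ε 1 (i+2) = 0 := rfl
lemma epsAt_ess (n i : ℕ) : epsAt C ε (n+2) (i+1) = C ◁ epsAt C ε (n+1) i := by
  cases i <;> rfl

lemma pure_counit (hΔ : Δ ≫ (C ◁ ε) ≫ (ρ_ C).hom = 𝟙 C) (X : 𝒜) :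
    ((Δ ▷ X) ≫ (α_ C C X).hom) ≫ (C ◁ ((ε ▷ X) ≫ (λ_ X).hom)) = 𝟙 (C ⊗ X) := by
  rw [MonoidalCategory.whiskerLeft_comp, assoc, ← associator_naturality_middle_assoc,
    MonoidalCategory.triangle, ← comp_whiskerRight_assoc, ← comp_whiskerRight,
    show (Δ ≫ C ◁ ε) ≫ (ρ_ C).hom = 𝟙 C by rw [assoc]; exact hΔ,
    MonoidalCategory.id_whiskerRight]

lemma pure_eps0 : ((ε ▷ C) ≫ (λ_ C).hom) ≫ ε = ((C ◁ ε) ≫ (ρ_ C).hom) ≫ ε := by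
  rw [assoc, ← leftUnitor_naturality, assoc, ← rightUnitor_naturality,
    whisker_exchange_assoc, unitors_equal]

lemma pure_eps_comm {X Y : 𝒜} (f : X ⟶ Y) :
    ((ε ▷ X) ≫ (λ_ X).hom) ≫ f = (C ◁ f) ≫ ((ε ▷ Y) ≫ (λ_ Y).hom) := by
  rw [assoc, ← leftUnitor_naturality, ← whisker_exchange_assoc]

lemma pure_comm'0 :
    (C ◁ ((ε ▷ C) ≫ (λ_ C).hom)) ≫ ((C ◁ ε) ≫ (ρ_ C).hom) =
      (C ◁ ((C ◁ ε) ≫ (ρ_ C).hom)) ≫ ((C ◁ ε) ≫ (ρ_ C).hom) := by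
  rw [← MonoidalCategory.whiskerLeft_comp_assoc, ← MonoidalCategory.whiskerLeft_comp_assoc,
    pure_eps0]

lemma pure_dfront0 :
    ((Δ ▷ C) ≫ (α_ C C C).hom) ≫ (C ◁ ((C ◁ ε) ≫ (ρ_ C).hom)) =
      ((C ◁ ε) ≫ (ρ_ C).hom) ≫ Δ := by
  rw [assoc, MonoidalCategory.whiskerLeft_comp, ← associator_naturality_right_assoc,
    ← rightUnitor_tensor_hom, ← whisker_exchange_assoc, rightUnitor_naturality, assoc]

lemma pure_dfront_comm {X Y : 𝒜} (f : X ⟶ Y) :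
    ((Δ ▷ X) ≫ (α_ C C X).hom) ≫ (C ◁ (C ◁ f)) =
      (C ◁ f) ≫ ((Δ ▷ Y) ≫ (α_ C C Y).hom) := by
  rw [assoc, ← associator_naturality_right, ← whisker_exchange_assoc]

/-- Applying `Δ` to the front factor and then `ε` to the second factor is the identity. -/
lemma aux_counit_front (hΔ : Δ ≫ (C ◁ ε) ≫ (ρ_ C).hom = 𝟙 C) (n : ℕ) :
    Dfront C Δ n ≫ epsAt C ε (n+1) 1 = 𝟙 (Cpow C (n+1)) := by
  cases n with
  | zero =>
      simp only [Dfront, epsAt_e00, epsAt_e0s, epsAt_es0, epsAt_e11, epsAt_e1ss, epsAt_ess]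
      exact hΔ
  | succ n =>
      simp only [Dfront, epsAt_e00, epsAt_e0s, epsAt_es0, epsAt_e11, epsAt_e1ss, epsAt_ess]
      exact pure_counit C ε Δ hΔ (Cpow C (n+1))

lemma aux_sub_comp (hΔ : Δ ≫ (C ◁ ε) ≫ (ρ_ C).hom = 𝟙 C) (n : ℕ) :
    (𝟙 (Cpow C (n+2)) - epsAt C ε (n+1) 1 ≫ Dfront C Δ n) ≫ epsAt C ε (n+1) 1 = 0 := by
  rw [Preadditive.sub_comp, id_comp, assoc, aux_counit_front C ε Δ hΔ n, comp_id, sub_self]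

/-- Removing factor `1` and then factor `m+1` equals removing factor `m+2` and then
factor `1`. -/
lemma aux_eps_comm' (n m : ℕ) :
    epsAt C ε (n+2) 1 ≫ epsAt C ε (n+1) (m+1) =
      epsAt C ε (n+2) (m+2) ≫ epsAt C ε (n+1) 1 := by
  cases n with
  | zero =>
      cases m with
      | zero =>
          simp only [epsAt_e00, epsAt_e0s, epsAt_es0, epsAt_e11, epsAt_e1ss, epsAt_ess]
          exact pure_comm'0 C ε
      | succ m => simp [epsAt_e00, epsAt_e0s, epsAt_es0, epsAt_e11, epsAt_e1ss, epsAt_ess]; erw [comp_zero, zero_comp]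
  | succ n =>
      simp only [epsAt_e00, epsAt_e0s, epsAt_es0, epsAt_e11, epsAt_e1ss, epsAt_ess]
      erw [← MonoidalCategory.whiskerLeft_comp, ← MonoidalCategory.whiskerLeft_comp,
        pure_eps_comm C ε (epsAt C ε (n+1) m)]
      rfl

/-- `Δ` on the front commutes with `ε` applied to a later factor. -/
lemma aux_dfront_comm (n i : ℕ) :
    Dfront C Δ (n+1) ≫ epsAt C ε (n+2) (i+2) = epsAt C ε (n+1) (i+1) ≫ Dfront C Δ n := by
  cases n with
  | zero =>
      cases i with
      | zero =>
          simp only [Dfront, epsAt_e00, epsAt_e0s, epsAt_es0, epsAt_e11, epsAt_e1ss, epsAt_ess]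
          exact pure_dfront0 C ε Δ
      | succ i => simp [Dfront, epsAt_e00, epsAt_e0s, epsAt_es0, epsAt_e11, epsAt_e1ss, epsAt_ess]; erw [comp_zero, zero_comp]
  | succ n =>
      simp only [Dfront, epsAt_e00, epsAt_e0s, epsAt_es0, epsAt_e11, epsAt_e1ss, epsAt_ess]
      exact pure_dfront_comm C Δ (epsAt C ε (n+1) i)

lemma aux_key (hΔ : Δ ≫ (C ◁ ε) ≫ (ρ_ C).hom = 𝟙 C) :
    ∀ n m, m ≤ n → eIdem C ε Δ (n+2) ≫ epsAt C ε (n+1) (m+1) = 0 := by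
  intro n
  induction n with
  | zero =>
      intro m hm
      obtain rfl : m = 0 := Nat.le_zero.mp hm
      erw [eIdem, assoc,
        show (𝟙 (Cpow C (0+2)) - epsAt C ε (0+1) 1 ≫ Dfront C Δ 0) ≫
            epsAt C ε (0+1) (0+1) = 0 from aux_sub_comp C ε Δ hΔ 0, comp_zero]
  | succ n IH =>
      intro m hm
      cases m with
      | zero =>
          erw [eIdem, assoc,
            show (𝟙 (Cpow C (n+1+2)) - epsAt C ε (n+1+1) 1 ≫ Dfront C Δ (n+1)) ≫
                epsAt C ε (n+1+1) (0+1) = 0 from aux_sub_comp C ε Δ hΔ (n+1), comp_zero]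
      | succ m =>
          have hm' : m ≤ n := by omega
          have hsplit : epsAt C ε (n+1+1) (m+1+1) = C ◁ epsAt C ε (n+1) (m+1) := by
            simp only [epsAt_e00, epsAt_e0s, epsAt_es0, epsAt_e11, epsAt_e1ss, epsAt_ess]
            rfl
          have hA : (C ◁ eIdem C ε Δ (n+1+1)) ≫ epsAt C ε (n+1+1) (m+1+1) = 0 := by
            erw [hsplit, ← MonoidalCategory.whiskerLeft_comp,
              show eIdem C ε Δ (n+1+1) ≫ epsAt C ε (n+1) (m+1) = 0 from IH m hm']
            simp
            rfl
          have hB : (epsAt C ε (n+1+1) 1 ≫ Dfront C Δ (n+1)) ≫ epsAt C ε (n+1+1) (m+1+1) =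
              epsAt C ε (n+1+1) (m+1+1) ≫ (epsAt C ε (n+1) 1 ≫ Dfront C Δ n) := by
            have hd : Dfront C Δ (n+1) ≫ epsAt C ε (n+1+1) (m+1+1) =
                epsAt C ε (n+1) (m+1) ≫ Dfront C Δ n := aux_dfront_comm C ε Δ n m
            have hc : epsAt C ε (n+1+1) 1 ≫ epsAt C ε (n+1) (m+1) =
                epsAt C ε (n+1+1) (m+1+1) ≫ epsAt C ε (n+1) 1 := aux_eps_comm' C ε n m
            rw [assoc, hd, ← assoc, hc, assoc]
          have hsub : (𝟙 (Cpow C (n+1+2)) - epsAt C ε (n+1+1) 1 ≫ Dfront C Δ (n+1)) ≫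
              epsAt C ε (n+1+1) (m+1+1) =
              epsAt C ε (n+1+1) (m+1+1) -
                epsAt C ε (n+1+1) (m+1+1) ≫ (epsAt C ε (n+1) 1 ≫ Dfront C Δ n) := by
            rw [Preadditive.sub_comp, hB, id_comp]
          erw [eIdem, assoc, hsub, Preadditive.comp_sub, hA, ← assoc, hA, zero_comp, sub_zero]
          rfl

end Aux

/-- Lemma 4.2 (`lemma:en kills ep`): `(id_{l−1} ⋆ ε ⋆ id_{n−l}) ∘ e_n = 0` for `2 ≤ l ≤ n`,
assuming only the right counit axiom. -/
theorem stmt_3 {𝒜 : Type*} [Category 𝒜] [MonoidalCategory 𝒜] [Preadditive 𝒜]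
    [MonoidalPreadditive 𝒜] (C : 𝒜) (ε : C ⟶ 𝟙_ 𝒜) (Δ : C ⟶ C ⊗ C)
    (hΔ : Δ ≫ (C ◁ ε) ≫ (ρ_ C).hom = 𝟙 C) (n l : ℕ) (hl : 2 ≤ l) (hn : l ≤ n) :
    eIdem C ε Δ n ≫ epsAtPos C ε n l = 0 := by
  obtain ⟨m, rfl⟩ : ∃ m, l = m + 2 := ⟨l - 2, by omega⟩
  obtain ⟨k, rfl⟩ : ∃ k, n = k + 2 := ⟨n - 2, by omega⟩
  simp only [epsAtPos]
  exact aux_key C ε Δ hΔ k m (by omega)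
end

section
/- Left e_n absorption: let D, E, F ∈ 𝒜, n ≥ 0, and let f : D → E ⋆ C^{⋆n} ⋆ F be a morphism such that (id_E ⋆ (id_{l−1} ⋆ ε ⋆ id_{n−l}) ⋆ id_F) ∘ f = 0 for all 2 ≤ l ≤ n. Then (id_E ⋆ e_n ⋆ id_F) ∘ f = f. -/
open CategoryTheory Category Limits MonoidalCategory ZeroObject

/-- Lemma 4.3 (left `e_n` absorption): if `f : D ⟶ E ⋆ C^{⋆n} ⋆ F` is annihilated by
`id_E ⋆ (id_{l−1} ⋆ ε ⋆ id_{n−l}) ⋆ id_F` for all `2 ≤ l ≤ n`, then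
`(id_E ⋆ e_n ⋆ id_F) ∘ f = f`, assuming only the right counit axiom. -/
theorem stmt_4 {𝒜 : Type*} [Category 𝒜] [MonoidalCategory 𝒜] [Preadditive 𝒜]
    [MonoidalPreadditive 𝒜] (C : 𝒜) (ε : C ⟶ 𝟙_ 𝒜) (Δ : C ⟶ C ⊗ C)
    (hΔ : Δ ≫ (C ◁ ε) ≫ (ρ_ C).hom = 𝟙 C) (D E F : 𝒜) (n : ℕ)
    (f : D ⟶ E ⊗ (Cpow C n ⊗ F))
    (hf : ∀ l, 2 ≤ l → l ≤ n → f ≫ (E ◁ (epsAtPos C ε n l ▷ F)) = 0) :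
    f ≫ (E ◁ (eIdem C ε Δ n ▷ F)) = f := by
  induction n generalizing E with
  | zero => simp [eIdem]
  | succ m ih =>
    cases m with
    | zero => simp [eIdem]
    | succ k =>
      -- total power is k+2; Cpow C (k+2) = C ⊗ Cpow C (k+1) definitionally
      set X := Cpow C (k+1) with hX
      change D ⟶ E ⊗ ((C ⊗ X) ⊗ F) at f
      have conj : ∀ {Y : 𝒜} (g : X ⟶ Y),
          (E ◁ ((C ◁ g) ▷ F)) =
            ((E ◁ (α_ C X F).hom) ≫ (α_ E C (X ⊗ F)).inv) ≫
              ((E ⊗ C) ◁ (g ▷ F)) ≫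
              ((α_ E C (Y ⊗ F)).hom ≫ (E ◁ (α_ C Y F).inv)) := by
        intro Y g
        monoidal
      have hφψ : ((E ◁ (α_ C X F).hom) ≫ (α_ E C (X ⊗ F)).inv) ≫
          ((α_ E C (X ⊗ F)).hom ≫ (E ◁ (α_ C X F).inv)) = 𝟙 _ := by
        monoidal
      set φ : E ⊗ ((C ⊗ X) ⊗ F) ⟶ (E ⊗ C) ⊗ (X ⊗ F) :=
        (E ◁ (α_ C X F).hom) ≫ (α_ E C (X ⊗ F)).inv with hφ
      have hf' : ∀ l, 2 ≤ l → l ≤ k + 1 →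
          (f ≫ φ) ≫ ((E ⊗ C) ◁ (epsAtPos C ε (k+1) l ▷ F)) = 0 := by
        intro l hl2 hl
        obtain ⟨i, rfl⟩ : ∃ i, l = i + 1 := ⟨l - 1, by omega⟩
        obtain ⟨j, rfl⟩ : ∃ j, k = j + 1 := ⟨k - 1, by omega⟩
        have key : f ≫ (E ◁ ((C ◁ epsAtPos C ε (j+2) (i+1)) ▷ F)) = 0 := by
          have h2 := hf (i+2) (by omega) (by omega)
          have : epsAtPos C ε (j+3) (i+2) = C ◁ epsAtPos C ε (j+2) (i+1) := by
            show epsAt C ε (j+2) (i+1) = C ◁ epsAt C ε (j+1) i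
            cases i <;> rfl
          rwa [this] at h2
        rw [conj] at key
        have := key =≫ ((E ◁ (α_ C (Cpow C (j+1)) F).hom) ≫
          (α_ E C (Cpow C (j+1) ⊗ F)).inv)
        simpa [hφ, Category.assoc] using this
      have hA : f ≫ (E ◁ ((C ◁ eIdem C ε Δ (k+1)) ▷ F)) = f := by
        calc f ≫ (E ◁ ((C ◁ eIdem C ε Δ (k+1)) ▷ F))
            = ((f ≫ φ) ≫ ((E ⊗ C) ◁ (eIdem C ε Δ (k+1) ▷ F))) ≫
                ((α_ E C (X ⊗ F)).hom ≫ (E ◁ (α_ C X F).inv)) := by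
              rw [conj]; simp only [Category.assoc]; rfl
          _ = (f ≫ φ) ≫ ((α_ E C (X ⊗ F)).hom ≫ (E ◁ (α_ C X F).inv)) := by
              rw [ih (E ⊗ C) (f ≫ φ) hf']
          _ = f := by rw [Category.assoc, hφψ]; exact Category.comp_id f
      have hB : f ≫ (E ◁ (epsAt C ε (k+1) 1 ▷ F)) = 0 := by
        have := hf 2 le_rfl (by omega)
        exact this
      show f ≫ (E ◁ (eIdem C ε Δ (k+2) ▷ F)) = f
      rw [show eIdem C ε Δ (k+2) = (C ◁ eIdem C ε Δ (k+1)) ≫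
        (𝟙 (Cpow C (k+2)) - (epsAt C ε (k+1) 1 ≫ Dfront C Δ k)) from rfl]
      erw [comp_whiskerRight, MonoidalCategory.whiskerLeft_comp, ← Category.assoc, hA]
      have h1 : (𝟙 (Cpow C (k+2)) - epsAt C ε (k+1) 1 ≫ Dfront C Δ k) ▷ F
          = 𝟙 (Cpow C (k+2)) ▷ F - (epsAt C ε (k+1) 1 ≫ Dfront C Δ k) ▷ F := by
        exact (tensorRight F).map_sub
      have h2 : E ◁ (𝟙 (Cpow C (k+2)) ▷ F - (epsAt C ε (k+1) 1 ≫ Dfront C Δ k) ▷ F)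
          = E ◁ (𝟙 (Cpow C (k+2)) ▷ F) - E ◁ ((epsAt C ε (k+1) 1 ≫ Dfront C Δ k) ▷ F) := by
        exact (tensorLeft E).map_sub
      erw [h1, h2, Preadditive.comp_sub, comp_whiskerRight,
        MonoidalCategory.whiskerLeft_comp, ← Category.assoc, hB]
      rw [zero_comp, sub_zero, MonoidalCategory.id_whiskerRight,
        MonoidalCategory.whiskerLeft_id]
      exact Category.comp_id f
end

section
/- For n ≥ 1 define π := (id_C ⋆ ε ⋆ id_{n−1}) ∘ (id_1 ⋆ e_n) : C^{⋆(n+1)} → C^{⋆n} and σ := (Δ ⋆ id_{n−1}) ∘ e_n : C^{⋆n} → C^{⋆(n+1)}. Then e_n ∘ π = π, σ ∘ e_n = σ, (id_1 ⋆ e_n) ∘ σ = σ, π ∘ σ = e_n, and (id_1 ⋆ e_n) − σ ∘ π = e_{n+1}. Consequently, in the Karoubi envelope of 𝒜 (in particular in 𝒜 itself when 𝒜 is idempotent complete), there is an isomorphism C ⋆ im(e_n) ≅ im(e_{n+1}) ⊕ im(e_n). -/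
open CategoryTheory Category Limits MonoidalCategory ZeroObject

attribute [reducible] Cpow

section Stmt5AuxSection
variable {𝒜 : Type*} [Category 𝒜] [MonoidalCategory 𝒜] [Preadditive 𝒜] [MonoidalPreadditive 𝒜]
variable (C : 𝒜) (ε : C ⟶ 𝟙_ 𝒜) (Δ : C ⟶ C ⊗ C)

namespace Stmt5Aux

set_option linter.unusedSectionVars false

variable (C : 𝒜) (ε : C ⟶ 𝟙_ 𝒜) (Δ : C ⟶ C ⊗ C)

lemma wl_sub {X A B : 𝒜} (f g : A ⟶ B) : X ◁ (f - g) = X ◁ f - X ◁ g := by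
  rw [eq_sub_iff_add_eq, ← MonoidalPreadditive.whiskerLeft_add, sub_add_cancel]

lemma eps0 (k : ℕ) :
    epsAt C ε (k+1) 0 = (ε ▷ Cpow C (k+1)) ≫ (λ_ (Cpow C (k+1))).hom := by
  rfl

lemma nat_r {A B : 𝒜} (f : A ⟶ B) :
    (C ◁ f) ≫ ((ε ▷ B) ≫ (λ_ B).hom) = ((ε ▷ A) ≫ (λ_ A).hom) ≫ f := by
  rw [whisker_exchange_assoc, MonoidalCategory.leftUnitor_naturality, Category.assoc]

lemma eps_eps : ((ε ▷ C) ≫ (λ_ C).hom) ≫ ε = ((C ◁ ε) ≫ (ρ_ C).hom) ≫ ε := by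
  rw [Category.assoc, Category.assoc, ← MonoidalCategory.leftUnitor_naturality,
    ← MonoidalCategory.rightUnitor_naturality, ← whisker_exchange_assoc, unitors_equal]

lemma D_eps (hΔ : Δ ≫ (C ◁ ε) ≫ (ρ_ C).hom = 𝟙 C) :
    ∀ k, Dfront C Δ k ≫ epsAt C ε (k+1) 1 = 𝟙 (Cpow C (k+1))
  | 0 => by exact hΔ
  | (k+1) => by
      show ((Δ ▷ Cpow C (k+1)) ≫ (α_ C C (Cpow C (k+1))).hom) ≫
        (C ◁ epsAt C ε (k+1) 0) = 𝟙 _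
      rw [eps0, MonoidalCategory.whiskerLeft_comp, Category.assoc,
        ← associator_naturality_middle_assoc, MonoidalCategory.triangle,
        ← comp_whiskerRight_assoc, ← comp_whiskerRight, Category.assoc, hΔ,
        MonoidalCategory.id_whiskerRight]

lemma slide_D {A B : 𝒜} (g : A ⟶ B) :
    (C ◁ g) ≫ ((Δ ▷ B) ≫ (α_ C C B).hom) = ((Δ ▷ A) ≫ (α_ C C A).hom) ≫ (C ◁ (C ◁ g)) := by
  rw [whisker_exchange_assoc, associator_naturality_right, Category.assoc]

lemma comm_eps : ∀ k, epsAt C ε (k+2) 1 ≫ epsAt C ε (k+1) 1 =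
    (C ◁ epsAt C ε (k+1) 1) ≫ epsAt C ε (k+1) 1
  | 0 => by
      show (C ◁ epsAt C ε 1 0) ≫ ((C ◁ ε) ≫ (ρ_ C).hom) =
        (C ◁ ((C ◁ ε) ≫ (ρ_ C).hom)) ≫ ((C ◁ ε) ≫ (ρ_ C).hom)
      rw [eps0, ← MonoidalCategory.whiskerLeft_comp_assoc,
        ← MonoidalCategory.whiskerLeft_comp_assoc]
      show (C ◁ (((ε ▷ Cpow C 1) ≫ (λ_ (Cpow C 1)).hom) ≫ ε)) ≫ (ρ_ C).hom = _
      rw [eps_eps]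
  | (k+1) => by
      show (C ◁ epsAt C ε (k+2) 0) ≫ (C ◁ epsAt C ε (k+1) 0) =
        (C ◁ (C ◁ epsAt C ε (k+1) 0)) ≫ (C ◁ epsAt C ε (k+1) 0)
      rw [← MonoidalCategory.whiskerLeft_comp, ← MonoidalCategory.whiskerLeft_comp]
      congr 1
      rw [eps0 C ε (k+1), eps0 C ε k]
      exact (nat_r C ε ((ε ▷ Cpow C (k+1)) ≫ (λ_ (Cpow C (k+1))).hom)).symm

lemma D_slide_eps : ∀ k, Dfront C Δ (k+1) ≫ (C ◁ epsAt C ε (k+1) 1) =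
    epsAt C ε (k+1) 1 ≫ Dfront C Δ k
  | 0 => by
      show ((Δ ▷ C) ≫ (α_ C C C).hom) ≫ (C ◁ ((C ◁ ε) ≫ (ρ_ C).hom)) =
        ((C ◁ ε) ≫ (ρ_ C).hom) ≫ Δ
      rw [MonoidalCategory.whiskerLeft_comp, Category.assoc,
        ← associator_naturality_right_assoc, whiskerLeft_rightUnitor, Iso.hom_inv_id_assoc,
        ← whisker_exchange_assoc, MonoidalCategory.rightUnitor_naturality, Category.assoc]
  | (k+1) => (slide_D C Δ (epsAt C ε (k+1) 0)).symm

lemma e_eps (hΔ : Δ ≫ (C ◁ ε) ≫ (ρ_ C).hom = 𝟙 C) (k : ℕ) :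
    eIdem C ε Δ (k+2) ≫ epsAt C ε (k+1) 1 = 0 := by
  show ((C ◁ eIdem C ε Δ (k+1)) ≫ (𝟙 _ - epsAt C ε (k+1) 1 ≫ Dfront C Δ k)) ≫
    epsAt C ε (k+1) 1 = 0
  rw [Category.assoc, Preadditive.sub_comp, Category.assoc, D_eps C ε Δ hΔ k]
  simp [Cpow]


lemma main (hΔ : Δ ≫ (C ◁ ε) ≫ (ρ_ C).hom = 𝟙 C) (n : ℕ) :
    (eIdem C ε Δ (n+1) ≫ eIdem C ε Δ (n+1) = eIdem C ε Δ (n+1)) ∧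
    ((C ◁ eIdem C ε Δ (n+1)) ≫ epsAt C ε (n+1) 1 ≫ eIdem C ε Δ (n+1) =
      (C ◁ eIdem C ε Δ (n+1)) ≫ epsAt C ε (n+1) 1) ∧
    (eIdem C ε Δ (n+1) ≫ Dfront C Δ n ≫ (C ◁ eIdem C ε Δ (n+1)) =
      eIdem C ε Δ (n+1) ≫ Dfront C Δ n) := by
  induction n with
  | zero => refine ⟨?_, ?_, ?_⟩ <;> simp [eIdem, Cpow]
  | succ n ih =>
    obtain ⟨ih1, ih2, ih3⟩ := ih
    set e := eIdem C ε Δ (n+1) with he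
    set L : Cpow C (n+2) ⟶ Cpow C (n+2) := C ◁ e with hLdef
    set t := epsAt C ε (n+1) 1 with ht
    set D := Dfront C Δ n with hD
    set E2 := eIdem C ε Δ (n+2) with hE2def
    have hE2' : E2 = L - L ≫ (t ≫ D) := by
      rw [hE2def, show eIdem C ε Δ (n+2) = (C ◁ eIdem C ε Δ (n+1)) ≫
        (𝟙 (Cpow C (n+2)) - epsAt C ε (n+1) 1 ≫ Dfront C Δ n) from rfl,
        Preadditive.comp_sub]
      congr 1
      exact Category.comp_id _
    have hL : L ≫ L = L := by
      rw [hLdef, ← MonoidalCategory.whiskerLeft_comp, ih1]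
    have hL' := reassoc_of% hL
    have ih2' := reassoc_of% ih2
    have hDt : D ≫ t = 𝟙 (Cpow C (n+1)) := D_eps C ε Δ hΔ n
    have hDt' := reassoc_of% hDt
    have key : L ≫ t ≫ D ≫ L = L ≫ t ≫ D := by
      calc L ≫ t ≫ D ≫ L = L ≫ t ≫ e ≫ D ≫ L := (ih2' _).symm
      _ = L ≫ t ≫ e ≫ D := by rw [ih3]
      _ = L ≫ t ≫ D := ih2' D
    have key' := reassoc_of% key
    have keyB : L ≫ t ≫ D ≫ L ≫ t ≫ D = L ≫ t ≫ D := by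
      rw [key' (t ≫ D), hDt' D]
    have hIdem2 : E2 ≫ E2 = E2 := by
      rw [hE2']
      simp only [Preadditive.sub_comp, Preadditive.comp_sub, Category.assoc]
      rw [hL, hL', key, keyB]
      abel
    have habs : E2 ≫ L = E2 := by
      rw [hE2', Preadditive.sub_comp, hL]
      simp only [Category.assoc]
      rw [key]
    have hB2 : E2 ≫ t = 0 := e_eps C ε Δ hΔ n
    -- S1
    have hTL : epsAt C ε (n+2) 1 ≫ L = (C ◁ L) ≫ epsAt C ε (n+2) 1 := by
      show (C ◁ epsAt C ε (n+1) 0) ≫ (C ◁ e) = (C ◁ L) ≫ (C ◁ epsAt C ε (n+1) 0)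
      rw [← MonoidalCategory.whiskerLeft_comp, ← MonoidalCategory.whiskerLeft_comp]
      congr 1
      rw [eps0]
      exact (nat_r C ε e).symm
    have hcomm := comm_eps C ε n
    rw [← ht] at hcomm
    have hcomm' := reassoc_of% hcomm
    have expand : epsAt C ε (n+2) 1 ≫ E2 =
        epsAt C ε (n+2) 1 ≫ L - epsAt C ε (n+2) 1 ≫ L ≫ t ≫ D := by
      rw [hE2', Preadditive.comp_sub]
    have habs' : (C ◁ E2) ≫ epsAt C ε (n+2) 1 ≫ L = (C ◁ E2) ≫ epsAt C ε (n+2) 1 := by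
      rw [hTL, ← MonoidalCategory.whiskerLeft_comp_assoc, habs]
    have habs'' := reassoc_of% habs'
    have S1 : (C ◁ E2) ≫ epsAt C ε (n+2) 1 ≫ E2 = (C ◁ E2) ≫ epsAt C ε (n+2) 1 := by
      rw [expand, Preadditive.comp_sub, habs', habs'' (t ≫ D), hcomm' D,
        ← MonoidalCategory.whiskerLeft_comp_assoc, hB2]
      simp
    -- S3
    have habs3 := reassoc_of% habs
    have hLD' : L ≫ Dfront C Δ (n+1) = Dfront C Δ (n+1) ≫ (C ◁ L) := slide_D C Δ e
    have expand2 : (C ◁ E2) = (C ◁ L) - C ◁ (L ≫ (t ≫ D)) := by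
      rw [hE2', wl_sub]
    have T1 : E2 ≫ Dfront C Δ (n+1) ≫ (C ◁ L) = E2 ≫ Dfront C Δ (n+1) := by
      rw [← hLD']
      exact habs3 _
    have T1' := reassoc_of% T1
    have ds := D_slide_eps C ε Δ n
    rw [← ht, ← hD] at ds
    have ds' := reassoc_of% ds
    have hB2' := reassoc_of% hB2
    have S3 : E2 ≫ Dfront C Δ (n+1) ≫ (C ◁ E2) = E2 ≫ Dfront C Δ (n+1) := by
      rw [expand2, Preadditive.comp_sub, Preadditive.comp_sub, T1,
        MonoidalCategory.whiskerLeft_comp, MonoidalCategory.whiskerLeft_comp,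
        T1' _, ds' _, hB2' _]
      simp
    exact ⟨hIdem2, S1, S3⟩

end Stmt5Aux
end Stmt5AuxSection

open CategoryTheory.Idempotents in
/-- Lemma 4.5 (`lemma:C times im e`) together with the explicit identities from its proof:
for `n = m + 1 ≥ 1`, with `π := (id_C ⋆ ε ⋆ id_{n−1}) ∘ (id_1 ⋆ e_n)` and
`σ := (Δ ⋆ id_{n−1}) ∘ e_n`, one has `e_n ∘ π = π`, `σ ∘ e_n = σ`, `(id_1 ⋆ e_n) ∘ σ = σ`,
`π ∘ σ = e_n`, `(id_1 ⋆ e_n) − σ ∘ π = e_{n+1}`; consequently in the Karoubi envelope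
`C ⋆ im(e_n) ≅ im(e_{n+1}) ⊕ im(e_n)`.
(The idempotency facts needed to form the Karoubi objects are taken as hypotheses;
they hold by the right counit axiom.) -/
theorem stmt_5 {𝒜 : Type*} [Category 𝒜] [MonoidalCategory 𝒜] [Preadditive 𝒜]
    [MonoidalPreadditive 𝒜] [HasFiniteBiproducts 𝒜]
    [HasBinaryBiproducts (CategoryTheory.Idempotents.Karoubi 𝒜)]
    (C : 𝒜) (ε : C ⟶ 𝟙_ 𝒜) (Δ : C ⟶ C ⊗ C)
    (hΔ : Δ ≫ (C ◁ ε) ≫ (ρ_ C).hom = 𝟙 C) (m : ℕ)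
    (h₁ : eIdem C ε Δ (m+1) ≫ eIdem C ε Δ (m+1) = eIdem C ε Δ (m+1))
    (h₂ : eIdem C ε Δ (m+2) ≫ eIdem C ε Δ (m+2) = eIdem C ε Δ (m+2))
    (h₃ : (C ◁ eIdem C ε Δ (m+1)) ≫ (C ◁ eIdem C ε Δ (m+1)) = C ◁ eIdem C ε Δ (m+1)) :
    ((C ◁ eIdem C ε Δ (m+1)) ≫ epsAt C ε (m+1) 1) ≫ eIdem C ε Δ (m+1) =
        (C ◁ eIdem C ε Δ (m+1)) ≫ epsAt C ε (m+1) 1 ∧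
    eIdem C ε Δ (m+1) ≫ (eIdem C ε Δ (m+1) ≫ Dfront C Δ m) =
        eIdem C ε Δ (m+1) ≫ Dfront C Δ m ∧
    (eIdem C ε Δ (m+1) ≫ Dfront C Δ m) ≫ (C ◁ eIdem C ε Δ (m+1)) =
        eIdem C ε Δ (m+1) ≫ Dfront C Δ m ∧
    (eIdem C ε Δ (m+1) ≫ Dfront C Δ m) ≫ ((C ◁ eIdem C ε Δ (m+1)) ≫ epsAt C ε (m+1) 1) =
        eIdem C ε Δ (m+1) ∧
    (show Cpow C (m+2) ⟶ Cpow C (m+2) from C ◁ eIdem C ε Δ (m+1)) -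
        (show Cpow C (m+2) ⟶ Cpow C (m+2) from
          ((C ◁ eIdem C ε Δ (m+1)) ≫ epsAt C ε (m+1) 1) ≫ (eIdem C ε Δ (m+1) ≫ Dfront C Δ m)) =
        eIdem C ε Δ (m+2) ∧
    Nonempty ((Karoubi.mk (Cpow C (m+2)) (C ◁ eIdem C ε Δ (m+1)) h₃ : Karoubi 𝒜) ≅
        (Karoubi.mk (Cpow C (m+2)) (eIdem C ε Δ (m+2)) h₂ ⊞
          Karoubi.mk (Cpow C (m+1)) (eIdem C ε Δ (m+1)) h₁)) := by
  obtain ⟨M1, M2, M3⟩ := Stmt5Aux.main C ε Δ hΔ m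
  set e := eIdem C ε Δ (m+1) with he
  set L : Cpow C (m+2) ⟶ Cpow C (m+2) := C ◁ e with hLdef
  set t := epsAt C ε (m+1) 1 with ht
  set D := Dfront C Δ m with hD
  set E2 := eIdem C ε Δ (m+2) with hE2def
  have M2' := reassoc_of% M2
  have M3' := reassoc_of% M3
  have h₁' := reassoc_of% h₁
  have h₃' := reassoc_of% h₃
  have hDt : D ≫ t = 𝟙 (Cpow C (m+1)) := Stmt5Aux.D_eps C ε Δ hΔ m
  have hDt' := reassoc_of% hDt
  have hE2' : E2 = L - L ≫ (t ≫ D) := by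
    rw [hE2def, show eIdem C ε Δ (m+2) = (C ◁ eIdem C ε Δ (m+1)) ≫
      (𝟙 (Cpow C (m+2)) - epsAt C ε (m+1) 1 ≫ Dfront C Δ m) from rfl,
      Preadditive.comp_sub]
    congr 1
    exact Category.comp_id _
  have key : L ≫ t ≫ D ≫ L = L ≫ t ≫ D := by
    calc L ≫ t ≫ D ≫ L = L ≫ t ≫ e ≫ D ≫ L := (M2' _).symm
    _ = L ≫ t ≫ e ≫ D := by rw [M3]
    _ = L ≫ t ≫ D := M2' D
  have hLE2 : L ≫ E2 = E2 := h₃' _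
  have hE2L : E2 ≫ L = E2 := by
    rw [hE2', Preadditive.sub_comp, h₃]
    simp only [Category.assoc]
    rw [key]
  have hE2t : E2 ≫ t = 0 := Stmt5Aux.e_eps C ε Δ hΔ m
  have G1 : (L ≫ t) ≫ e = L ≫ t := by rw [Category.assoc]; exact M2
  have G3 : (e ≫ D) ≫ L = e ≫ D := by rw [Category.assoc]; exact M3
  have G4 : (e ≫ D) ≫ (L ≫ t) = e := by
    simp only [Category.assoc]
    rw [M3' t, hDt, Category.comp_id]
  have G5 : L - (L ≫ t) ≫ (e ≫ D) = E2 := by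
    simp only [Category.assoc]
    rw [M2' D, hE2']
  refine ⟨G1, by rw [← Category.assoc, h₁], G3, G4, G5, ⟨?_⟩⟩
  refine ⟨biprod.lift ⟨E2, by rw [h₂, hLE2]⟩ ⟨L ≫ t, ?_⟩,
    biprod.desc ⟨E2, by rw [hE2L, h₂]⟩ ⟨e ≫ D, ?_⟩, ?_, ?_⟩
  · -- L ≫ t = L ≫ (L ≫ t) ≫ e
    rw [G1, ← Category.assoc, h₃]
  · -- e ≫ D = e ≫ (e ≫ D) ≫ L
    rw [G3, ← Category.assoc, h₁]
  · -- hom_inv_id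
    rw [biprod.lift_desc]
    apply Karoubi.hom_ext
    show E2 ≫ E2 + (L ≫ t) ≫ (e ≫ D) = L
    rw [h₂]
    simp only [Category.assoc]
    rw [M2' D, hE2']
    exact sub_add_cancel _ _
  · -- inv_hom_id
    apply biprod.hom_ext'
    · rw [biprod.inl_desc_assoc, Category.comp_id]
      apply biprod.hom_ext
      · rw [Category.assoc, biprod.lift_fst, biprod.inl_fst]
        apply Karoubi.hom_ext
        exact h₂
      · rw [Category.assoc, biprod.lift_snd, biprod.inl_snd]
        apply Karoubi.hom_ext
        show E2 ≫ (L ≫ t) = 0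
        rw [← Category.assoc, hE2L, hE2t]
    · rw [biprod.inr_desc_assoc, Category.comp_id]
      apply biprod.hom_ext
      · rw [Category.assoc, biprod.lift_fst, biprod.inr_fst]
        apply Karoubi.hom_ext
        show (e ≫ D) ≫ E2 = 0
        rw [hE2', Preadditive.comp_sub]
        simp only [Category.assoc]
        rw [M3' (t ≫ D), hDt' D, M3]
        exact sub_self _
      · rw [Category.assoc, biprod.lift_snd, biprod.inr_snd]
        apply Karoubi.hom_ext
        exact G4
end
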